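/- arXiv:2311.07404 — 3 statements merged into one kernel-verified Lean document; each statement's English description precedes it below -/
import Mathlib

section
/- Let S and M be positive semidefinite symmetric real n×n matrices. Then the matrix I + S·M is invertible, and the matrix X = (I + S·M)⁻¹·S satisfies max_{i,j} |X_{ij}| ≤ max_{i,j} |S_{ij}|. -/
open Matrix

private lemma aux_unit {n : ℕ} (S M : Matrix (Fin n) (Fin n) ℝ)
    (hS : S.PosSemidef) (hM : M.PosSemidef) : IsUnit (1 + S * M) := by
  rw [← Matrix.mulVec_injective_iff_isUnit]
  intro u v huv
  have h0 : (1 + S * M) *ᵥ (u - v) = 0 := by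
    rw [mulVec_sub, huv, sub_self]
  set w := u - v with hw
  have h1 : w + S *ᵥ (M *ᵥ w) = 0 := by
    rw [add_mulVec, one_mulVec, ← mulVec_mulVec] at h0
    exact h0
  have h2 : (0:ℝ) = w ⬝ᵥ (M *ᵥ w) + (M *ᵥ w) ⬝ᵥ (S *ᵥ (M *ᵥ w)) := by
    have := congrArg (fun x => (M *ᵥ w) ⬝ᵥ x) h1
    simpa [dotProduct_add, dotProduct_comm (M *ᵥ w) w] using this.symm
  have hM0 : 0 ≤ w ⬝ᵥ (M *ᵥ w) := by simpa using hM.dotProduct_mulVec_nonneg w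
  have hS0 : 0 ≤ (M *ᵥ w) ⬝ᵥ (S *ᵥ (M *ᵥ w)) := by simpa using hS.dotProduct_mulVec_nonneg (M *ᵥ w)
  have hMw : M *ᵥ w = 0 := by
    have hz : w ⬝ᵥ (M *ᵥ w) = 0 := by linarith
    exact (hM.dotProduct_mulVec_zero_iff w).mp (by simpa using hz)
  have : w = 0 := by simpa [hMw] using h1
  exact sub_eq_zero.mp this

private lemma psd_entry_bound {n : ℕ} {A : Matrix (Fin n) (Fin n) ℝ} (hA : A.PosSemidef)
    (i j : Fin n) : |A i j| ≤ (A i i + A j j) / 2 := by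
  have hsym : A j i = A i j := by simpa using hA.1.apply i j
  have key : ∀ c : ℝ, 0 ≤ A i i + c * A i j + c * A j i + c * c * A j j := by
    intro c
    have h := hA.dotProduct_mulVec_nonneg ((Pi.single i 1 : Fin n → ℝ) + c • (Pi.single j 1 : Fin n → ℝ))
    simp only [star_trivial, mulVec_add, mulVec_smul, dotProduct_add, add_dotProduct,
      smul_dotProduct, dotProduct_smul, mulVec_single, single_dotProduct, smul_eq_mul,
      mul_one, one_mul, op_smul_eq_mul, col_apply] at h
    nlinarith [h]
  have k1 := key 1
  have k2 := key (-1)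
  rw [abs_le]; constructor <;> nlinarith [k1, k2, hsym]

theorem stmt0 {n : ℕ} (S M : Matrix (Fin n) (Fin n) ℝ)
    (hS : S.PosSemidef) (hM : M.PosSemidef) :
    IsUnit (1 + S * M) ∧
      ∀ i j, |((1 + S * M)⁻¹ * S) i j| ≤ ⨆ p : (Fin n) × (Fin n), |S p.1 p.2| := by
  have hSt : Sᵀ = S := by
    rw [← conjTranspose_eq_transpose_of_trivial, hS.1.eq]
  have hUT : IsUnit (1 + S * M) := aux_unit S M hS hM
  have hUT' : IsUnit (1 + M * S) := aux_unit M S hM hS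
  have hdT : IsUnit (1 + S * M).det := (isUnit_iff_isUnit_det _).mp hUT
  have hdT' : IsUnit (1 + M * S).det := (isUnit_iff_isUnit_det _).mp hUT'
  have hcomm : (1 + S * M) * S = S * (1 + M * S) := by noncomm_ring
  have hX : (1 + S * M)⁻¹ * S = S * (1 + M * S)⁻¹ := by
    calc (1 + S * M)⁻¹ * S
        = (1 + S * M)⁻¹ * (S * (1 + M * S)) * (1 + M * S)⁻¹ := by
          rw [Matrix.mul_assoc ((1 + S * M)⁻¹), Matrix.mul_assoc S,
            Matrix.mul_nonsing_inv _ hdT', Matrix.mul_one]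
      _ = (1 + S * M)⁻¹ * ((1 + S * M) * S) * (1 + M * S)⁻¹ := by rw [hcomm]
      _ = S * (1 + M * S)⁻¹ := by
          rw [← Matrix.mul_assoc ((1 + S * M)⁻¹), Matrix.nonsing_inv_mul _ hdT,
            Matrix.one_mul]
  have hT'conj : (1 + M * S)ᴴ = (1 + S * M) := by
    rw [conjTranspose_add, conjTranspose_mul, conjTranspose_one, hM.1.eq, hS.1.eq]
  have hXherm : (S * (1 + M * S)⁻¹).IsHermitian := by
    rw [Matrix.IsHermitian, conjTranspose_mul, conjTranspose_nonsing_inv, hT'conj,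
      hS.1.eq, ← hX]
  have hvw : ∀ v : Fin n → ℝ,
      v = (1 + M * S)⁻¹ *ᵥ v + M *ᵥ (S *ᵥ ((1 + M * S)⁻¹ *ᵥ v)) := by
    intro v
    have h : (1 + M * S) *ᵥ ((1 + M * S)⁻¹ *ᵥ v) = v := by
      rw [mulVec_mulVec, Matrix.mul_nonsing_inv _ hdT', one_mulVec]
    conv_lhs => rw [← h]
    rw [add_mulVec, one_mulVec, ← mulVec_mulVec]
  have hXmulVec : ∀ v : Fin n → ℝ,
      (S * (1 + M * S)⁻¹) *ᵥ v = S *ᵥ ((1 + M * S)⁻¹ *ᵥ v) := fun v =>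
    (mulVec_mulVec v S _).symm
  have hXpsd : (S * (1 + M * S)⁻¹).PosSemidef := by
    refine PosSemidef.of_dotProduct_mulVec_nonneg hXherm (fun v => ?_)
    rw [star_trivial, hXmulVec v]
    set w := (1 + M * S)⁻¹ *ᵥ v with hwdef
    have h1 : 0 ≤ w ⬝ᵥ (S *ᵥ w) := by simpa using hS.dotProduct_mulVec_nonneg w
    have h2 : 0 ≤ (S *ᵥ w) ⬝ᵥ (M *ᵥ (S *ᵥ w)) := by simpa using hM.dotProduct_mulVec_nonneg (S *ᵥ w)
    calc (0:ℝ) ≤ w ⬝ᵥ (S *ᵥ w) + (M *ᵥ (S *ᵥ w)) ⬝ᵥ (S *ᵥ w) := by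
          rw [dotProduct_comm (M *ᵥ (S *ᵥ w))]; linarith
      _ = v ⬝ᵥ (S *ᵥ w) := by
          conv_rhs => rw [hvw v, ← hwdef]
          rw [add_dotProduct]
  have hdiag : ∀ a, (S * (1 + M * S)⁻¹) a a ≤ S a a := by
    intro a
    set v := (Pi.single a 1 : Fin n → ℝ) with hv
    set w := (1 + M * S)⁻¹ *ᵥ v with hwdef
    have hSXv : (S - S * (1 + M * S)⁻¹) *ᵥ v = S *ᵥ (M *ᵥ (S *ᵥ w)) := by
      rw [sub_mulVec, hXmulVec v, ← hwdef]
      conv_lhs => rw [hvw v, ← hwdef]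
      rw [mulVec_add, add_sub_cancel_left]
    have h2 : 0 ≤ (M *ᵥ (S *ᵥ w)) ⬝ᵥ (S *ᵥ (M *ᵥ (S *ᵥ w))) := by
      simpa using hS.dotProduct_mulVec_nonneg (M *ᵥ (S *ᵥ w))
    have h1 : 0 ≤ w ⬝ᵥ (S *ᵥ (M *ᵥ (S *ᵥ w))) := by
      have heq : w ⬝ᵥ (S *ᵥ (M *ᵥ (S *ᵥ w))) = (S *ᵥ w) ⬝ᵥ (M *ᵥ (S *ᵥ w)) := by
        rw [dotProduct_mulVec, ← mulVec_transpose, hSt]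
      rw [heq]
      simpa using hM.dotProduct_mulVec_nonneg (S *ᵥ w)
    have hquad : 0 ≤ v ⬝ᵥ ((S - S * (1 + M * S)⁻¹) *ᵥ v) := by
      rw [hSXv]
      conv_rhs => rw [hvw v, ← hwdef]
      rw [add_dotProduct]
      exact add_nonneg h1 h2
    have hval : v ⬝ᵥ ((S - S * (1 + M * S)⁻¹) *ᵥ v)
        = S a a - (S * (1 + M * S)⁻¹) a a := by
      rw [hv]
      simp [mulVec_single, single_dotProduct, Matrix.sub_apply]
    rw [hval] at hquad
    linarith
  refine ⟨hUT, fun i j => ?_⟩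
  have hbound := psd_entry_bound hXpsd i j
  have hbdd : BddAbove (Set.range fun p : (Fin n) × (Fin n) => |S p.1 p.2|) :=
    Set.Finite.bddAbove (Set.finite_range _)
  have hle : ∀ a : Fin n, S a a ≤ ⨆ p : (Fin n) × (Fin n), |S p.1 p.2| := fun a =>
    (le_abs_self _).trans (le_ciSup hbdd (a, a))
  calc |((1 + S * M)⁻¹ * S) i j| = |(S * (1 + M * S)⁻¹) i j| := by rw [hX]
    _ ≤ ((S * (1 + M * S)⁻¹) i i + (S * (1 + M * S)⁻¹) j j) / 2 := hbound
    _ ≤ (S i i + S j j) / 2 := by have := hdiag i; have := hdiag j; linarith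
    _ ≤ ⨆ p : (Fin n) × (Fin n), |S p.1 p.2| := by
        have h1 := hle i; have h2 := hle j; linarith
end

section
/- Let λ < λ_d ≤ λᵢ for all i (i.e., λ is strictly below all the nodes λ₁ ≥ ⋯ ≥ λ_d), with the semi-inner product ⟨p,q⟩ = Σᵢ bᵢ² p(λᵢ) q(λᵢ) positive definite on polynomials of degree ≤ n. Let ζₙ be the minimizer of ‖ζ‖² subject to ζ(λ) = 1 over degree ≤ n, and let π_{n+1} be the (n+1)-th monic orthogonal polynomial. Then ζₙ has degree exactly n, its roots are real, simple, and lie in [λ_d, λ₁], and the roots of ζₙ strictly interlace those of π_{n+1}. -/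
/-- The weighted discrete semi-inner product ⟨p, q⟩ = Σᵢ bᵢ² p(λᵢ) q(λᵢ). -/
noncomputable def wip {d : ℕ} (b lam : Fin d → ℝ) (p q : Polynomial ℝ) : ℝ :=
  ∑ i, (b i) ^ 2 * p.eval (lam i) * q.eval (lam i)

namespace Stmt10Aux
open Polynomial Finset Filter

variable {d : ℕ} (b lam : Fin d → ℝ)

lemma wip_comm (p q : Polynomial ℝ) : wip b lam p q = wip b lam q p := by
  unfold wip; exact Finset.sum_congr rfl fun i _ => by ring

lemma wip_self_nonneg (p : Polynomial ℝ) : 0 ≤ wip b lam p p := by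
  unfold wip
  refine Finset.sum_nonneg fun i _ => ?_
  have h : (b i)^2 * p.eval (lam i) * p.eval (lam i) = (b i * p.eval (lam i))^2 := by ring
  rw [h]; positivity

lemma wip_mul_move (p q r : Polynomial ℝ) : wip b lam (p * q) r = wip b lam p (q * r) := by
  unfold wip; refine Finset.sum_congr rfl fun i _ => by simp [eval_mul]; ring

lemma wip_sub_right (p q q' : Polynomial ℝ) :
    wip b lam p (q - q') = wip b lam p q - wip b lam p q' := by
  unfold wip; rw [← Finset.sum_sub_distrib]
  exact Finset.sum_congr rfl fun i _ => by simp [eval_sub]; ring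

lemma wip_smul_right (c : ℝ) (p q : Polynomial ℝ) :
    wip b lam p (Polynomial.C c * q) = c * wip b lam p q := by
  unfold wip; rw [Finset.mul_sum]
  exact Finset.sum_congr rfl fun i _ => by simp [eval_mul]; ring

lemma wip_expand (p q : Polynomial ℝ) (t : ℝ) :
    wip b lam (p + Polynomial.C t * q) (p + Polynomial.C t * q)
      = wip b lam p p + 2*t*(wip b lam p q) + t^2 * (wip b lam q q) := by
  unfold wip
  rw [Finset.mul_sum, Finset.mul_sum, ← Finset.sum_add_distrib, ← Finset.sum_add_distrib]
  refine Finset.sum_congr rfl fun i _ => ?_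
  simp only [eval_add, eval_mul, eval_C]
  ring

/-- product of negatives -/
lemma prod_neg_sign {α : Type*} (s : Finset α) (f : α → ℝ) (hf : ∀ x ∈ s, f x < 0) :
    ∃ A : ℝ, 0 < A ∧ ∏ x ∈ s, f x = (-1)^s.card * A := by
  refine ⟨∏ x ∈ s, (-f x), Finset.prod_pos fun x hx => by linarith [hf x hx], ?_⟩
  rw [← Finset.prod_const, ← Finset.prod_mul_distrib]
  exact Finset.prod_congr rfl fun x _ => by ring

/-- monic with no real roots is positive -/
lemma monic_no_root_pos (u : Polynomial ℝ) (hu : u.Monic) (h : ∀ x : ℝ, u.eval x ≠ 0) :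
    ∀ x : ℝ, 0 < u.eval x := by
  intro x
  rcases eq_or_lt_of_le (Nat.zero_le u.natDegree) with hd | hd
  · have : u = 1 := hu.natDegree_eq_zero.mp hd.symm
    simp [this]
  · by_contra hneg
    push_neg at hneg
    have hlt : u.eval x < 0 := lt_of_le_of_ne hneg (h x)
    have hdeg : 0 < u.degree := by
      rw [Polynomial.natDegree_pos_iff_degree_pos] at hd; exact hd
    have htop : Tendsto (fun y => u.eval y) atTop atTop :=
      Polynomial.tendsto_atTop_of_leadingCoeff_nonneg u hdeg (by simp [hu.leadingCoeff])
    obtain ⟨y2, hy2⟩ := ((htop.eventually_ge_atTop 1).and (eventually_ge_atTop x)).exists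
    obtain ⟨z, _, hz⟩ := intermediate_value_Icc hy2.2 (u.continuousOn)
      (Set.mem_Icc.mpr ⟨le_of_lt hlt, by linarith [hy2.1]⟩)
    exact h z hz

lemma prod_X_sub_C_dvd_of_roots {m : ℕ} (γ : Fin m → ℝ) (hγ : Function.Injective γ)
    (f : Polynomial ℝ) (hroots : ∀ i, f.eval (γ i) = 0) :
    (∏ i, (X - C (γ i))) ∣ f := by
  rcases eq_or_ne f 0 with rfl | hf
  · exact dvd_zero _
  · have hnd : (Multiset.map γ Finset.univ.val).Nodup :=
      Multiset.Nodup.map hγ Finset.univ.nodup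
    have hs : (Multiset.map γ Finset.univ.val) ≤ f.roots := by
      rw [Multiset.le_iff_count]
      intro a
      by_cases ha : a ∈ Multiset.map γ Finset.univ.val
      · obtain ⟨i, _, rfl⟩ := Multiset.mem_map.mp ha
        have h1 : Multiset.count (γ i) (Multiset.map γ Finset.univ.val) ≤ 1 :=
          Multiset.nodup_iff_count_le_one.mp hnd _
        have h2 : 1 ≤ Multiset.count (γ i) f.roots := by
          rw [Multiset.one_le_count_iff_mem, Polynomial.mem_roots hf]
          exact hroots i
        omega
      · rw [Multiset.count_eq_zero_of_notMem ha]; exact Nat.zero_le _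
    have h := (Multiset.prod_X_sub_C_dvd_iff_le_roots hf (Multiset.map γ Finset.univ.val)).mpr hs
    rw [Multiset.map_map] at h
    convert h using 1
    rfl

lemma factor_of_distinct_roots {m : ℕ} (p : Polynomial ℝ) (hp : p ≠ 0)
    (hdeg : p.natDegree = m) (γ : Fin m → ℝ) (hγ : Function.Injective γ)
    (hroots : ∀ i, p.eval (γ i) = 0) :
    p = C p.leadingCoeff * ∏ i, (X - C (γ i)) := by
  obtain ⟨q, hq⟩ := prod_X_sub_C_dvd_of_roots γ hγ p hroots
  have hmonic : (∏ i, (X - C (γ i)) : Polynomial ℝ).Monic :=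
    monic_prod_of_monic _ _ fun i _ => monic_X_sub_C _
  have hpdeg : (∏ i, (X - C (γ i)) : Polynomial ℝ).natDegree = m := by
    rw [natDegree_prod _ _ fun i _ => X_sub_C_ne_zero _]
    simp
  have hq0 : q ≠ 0 := by rintro rfl; simp at hq; exact hp hq
  have hqdeg : q.natDegree = 0 := by
    have h := hq ▸ hdeg
    rw [natDegree_mul hmonic.ne_zero hq0, hpdeg] at h
    omega
  obtain ⟨c, rfl⟩ := natDegree_eq_zero.mp hqdeg
  have hlc : p.leadingCoeff = c := by
    rw [hq, leadingCoeff_mul, hmonic.leadingCoeff, one_mul, leadingCoeff_C]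
  conv_lhs => rw [hq]
  rw [hlc, mul_comm]

lemma erase_eq_Iio_union_Ioi {n : ℕ} (j : Fin (n+1)) :
    Finset.univ.erase j = Finset.Iio j ∪ Finset.Ioi j := by
  ext k
  simp only [Finset.mem_erase, Finset.mem_union, Finset.mem_Iio, Finset.mem_Ioi,
    Finset.mem_univ, and_true]
  constructor
  · intro h; exact lt_or_gt_of_ne h
  · rintro (h | h)
    · exact ne_of_lt h
    · exact ne_of_gt h

section PiLemma
variable {d n : ℕ} {b lam : Fin d → ℝ} {lam_d lam_1 : ℝ}
  (hnodes : ∀ i, lam i ∈ Set.Icc lam_d lam_1)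
  (hpd : ∀ p : Polynomial ℝ, p.natDegree ≤ n → wip b lam p p = 0 → p = 0)
  {π : Polynomial ℝ} (hmon : π.Monic) (hdeg : π.natDegree = n + 1)
  (horth : ∀ q : Polynomial ℝ, q.natDegree ≤ n → wip b lam q π = 0)

include hnodes hpd hmon hdeg horth in
/-- any real root of π lies in Icc -/
lemma root_in_Icc {a : ℝ} (ha : π.eval a = 0) : a ∈ Set.Icc lam_d lam_1 := by
  have hπ0 : π ≠ 0 := hmon.ne_zero
  obtain ⟨w, hw⟩ : (X - C a) ∣ π := dvd_iff_isRoot.mpr ha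
  have hw0 : w ≠ 0 := by rintro rfl; simp at hw; exact hπ0 hw
  have hwdeg : w.natDegree = n := by
    have h := hdeg ▸ hw ▸ natDegree_mul (X_sub_C_ne_zero a) hw0
    rw [natDegree_X_sub_C] at h; omega
  have h0 : wip b lam w π = 0 := horth w (le_of_eq hwdeg)
  have hterm : ∀ i, (b i)^2 * w.eval (lam i) * π.eval (lam i)
      = (lam i - a) * (b i * w.eval (lam i))^2 := by
    intro i; rw [hw]; simp [eval_mul, eval_sub]; ring
  constructor
  · by_contra hlt
    push_neg at hlt
    have hzero : ∀ i ∈ Finset.univ, (0:ℝ) ≤ (b i)^2 * w.eval (lam i) * π.eval (lam i) := by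
      intro i _
      rw [hterm i]
      have h : 0 ≤ lam i - a := by have := (hnodes i).1; linarith
      positivity
    have hall := (Finset.sum_eq_zero_iff_of_nonneg hzero).mp h0
    have hww : wip b lam w w = 0 := by
      unfold wip
      refine Finset.sum_eq_zero fun i _ => ?_
      have hi := hall i (Finset.mem_univ i)
      rw [hterm i] at hi
      have hpos : 0 < lam i - a := by have := (hnodes i).1; linarith
      have hsq : (b i * w.eval (lam i))^2 = 0 := by
        rcases mul_eq_zero.mp hi with h | h
        · linarith
        · exact h
      have hb : b i * w.eval (lam i) = 0 := sq_eq_zero_iff.mp hsq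
      calc (b i)^2 * w.eval (lam i) * w.eval (lam i)
          = (b i * w.eval (lam i))^2 := by ring
        _ = 0 := by rw [hb]; ring
    exact absurd (hpd w (le_of_eq hwdeg) hww) hw0
  · by_contra hlt
    push_neg at hlt
    have hzero : ∀ i ∈ Finset.univ, (0:ℝ) ≤ -((b i)^2 * w.eval (lam i) * π.eval (lam i)) := by
      intro i _
      rw [hterm i]
      have h : lam i - a ≤ 0 := by have := (hnodes i).2; linarith
      nlinarith [sq_nonneg (b i * w.eval (lam i))]
    have h0' : ∑ i, -((b i)^2 * w.eval (lam i) * π.eval (lam i)) = 0 := by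
      rw [Finset.sum_neg_distrib]
      unfold wip at h0
      rw [h0]; ring
    have hall := (Finset.sum_eq_zero_iff_of_nonneg hzero).mp h0'
    have hww : wip b lam w w = 0 := by
      unfold wip
      refine Finset.sum_eq_zero fun i _ => ?_
      have hi := hall i (Finset.mem_univ i)
      rw [hterm i] at hi
      have hneg2 : lam i - a < 0 := by have := (hnodes i).2; linarith
      have hsq : (b i * w.eval (lam i))^2 = 0 := by
        have hi' : (lam i - a) * (b i * w.eval (lam i))^2 = 0 := by linarith
        rcases mul_eq_zero.mp hi' with h | h
        · linarith
        · exact h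
      have hb : b i * w.eval (lam i) = 0 := sq_eq_zero_iff.mp hsq
      calc (b i)^2 * w.eval (lam i) * w.eval (lam i)
          = (b i * w.eval (lam i))^2 := by ring
        _ = 0 := by rw [hb]; ring
    exact absurd (hpd w (le_of_eq hwdeg) hww) hw0

include hpd hmon hdeg horth in
lemma pi_roots_card : π.roots.card = n + 1 := by
  have hπ0 : π ≠ 0 := hmon.ne_zero
  have hle : π.roots.card ≤ n + 1 := hdeg ▸ π.card_roots'
  rcases lt_or_ge π.roots.card (n+1) with hlt | hge
  · exfalso
    set v : Polynomial ℝ := (π.roots.map fun a => X - C a).prod with hv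
    obtain ⟨u, hu⟩ : v ∣ π := π.prod_multiset_X_sub_C_dvd
    have hvmon : v.Monic := monic_multiset_prod_of_monic _ _ fun a _ => monic_X_sub_C a
    have humon : u.Monic := hvmon.of_mul_monic_left (hu ▸ hmon)
    have hu0 : u ≠ 0 := humon.ne_zero
    have hvdeg : v.natDegree = π.roots.card := by
      rw [hv, natDegree_multiset_prod_X_sub_C_eq_card]
    have huroots : u.roots = 0 := by
      have h := roots_mul (hu ▸ hπ0 : v * u ≠ 0)
      rw [← hu, hv, roots_multiset_prod_X_sub_C] at h
      exact left_eq_add.mp h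
    have hupos : ∀ x : ℝ, 0 < u.eval x := by
      apply monic_no_root_pos u humon
      intro x hx
      have h : x ∈ u.roots := (mem_roots hu0).mpr hx
      rw [huroots] at h
      exact absurd h (Multiset.notMem_zero x)
    have h0 : wip b lam v π = 0 := horth v (by omega)
    have hterm : ∀ i, (b i)^2 * v.eval (lam i) * π.eval (lam i)
        = u.eval (lam i) * (b i * v.eval (lam i))^2 := by
      intro i; rw [hu]; simp [eval_mul]; ring
    have hzero : ∀ i ∈ Finset.univ, (0:ℝ) ≤ (b i)^2 * v.eval (lam i) * π.eval (lam i) := by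
      intro i _; rw [hterm i]
      have := hupos (lam i); positivity
    have hall := (Finset.sum_eq_zero_iff_of_nonneg hzero).mp h0
    have hvv : wip b lam v v = 0 := by
      unfold wip
      refine Finset.sum_eq_zero fun i _ => ?_
      have hi := hall i (Finset.mem_univ i)
      rw [hterm i] at hi
      have hb : b i * v.eval (lam i) = 0 := by
        have hui := hupos (lam i)
        have h2 : (b i * v.eval (lam i))^2 = 0 := by
          rcases mul_eq_zero.mp hi with h | h
          · linarith
          · exact h
        exact sq_eq_zero_iff.mp h2
      calc (b i)^2 * v.eval (lam i) * v.eval (lam i)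
          = (b i * v.eval (lam i))^2 := by ring
        _ = 0 := by rw [hb]; ring
    exact absurd (hpd v (by omega) hvv) hvmon.ne_zero
  · omega

include hpd hmon hdeg horth in
lemma pi_roots_nodup : π.roots.Nodup := by
  have hπ0 : π ≠ 0 := hmon.ne_zero
  rw [Multiset.nodup_iff_count_le_one]
  intro a
  by_contra hcnt
  push_neg at hcnt
  have h2 : 2 ≤ π.rootMultiplicity a := by rw [← count_roots]; omega
  have hdvd : (X - C a)^2 ∣ π := (pow_dvd_pow _ h2).trans (π.pow_rootMultiplicity_dvd a)
  obtain ⟨r, hr⟩ := hdvd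
  have hr0 : r ≠ 0 := by rintro rfl; simp at hr; exact hπ0 hr
  have hrdeg : r.natDegree = n - 1 ∧ 1 ≤ n := by
    have h := hdeg ▸ hr ▸ natDegree_mul (pow_ne_zero 2 (X_sub_C_ne_zero a)) hr0
    rw [natDegree_pow, natDegree_X_sub_C] at h
    omega
  set s : Polynomial ℝ := (X - C a) * r with hs
  have hsdeg : s.natDegree ≤ n := by
    calc s.natDegree ≤ 1 + r.natDegree := by
          have h := natDegree_mul_le (p := X - C a) (q := r)
          rwa [natDegree_X_sub_C] at h
      _ ≤ n := by omega
  have h0 : wip b lam r π = 0 := horth r (by omega)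
  have hss : wip b lam s s = 0 := by
    unfold wip
    unfold wip at h0
    rw [← h0]
    refine Finset.sum_congr rfl fun i _ => ?_
    rw [hr, hs]
    simp [eval_mul, eval_pow, eval_sub]
    ring
  have hs0 : s = 0 := hpd s hsdeg hss
  have : π = 0 := by
    rw [hr, pow_two, mul_assoc, ← hs, hs0, mul_zero]
  exact hπ0 this

end PiLemma
end Stmt10Aux

open Polynomial Finset Stmt10Aux in
theorem stmt10 {d n : ℕ} (b lam : Fin d → ℝ) (lam_d lam_1 lm : ℝ)
    (hnodes : ∀ i, lam i ∈ Set.Icc lam_d lam_1) (hlm : lm < lam_d)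
    (hpd : ∀ p : Polynomial ℝ, p.natDegree ≤ n → wip b lam p p = 0 → p = 0)
    (ζ π : Polynomial ℝ)
    (hζ : ζ.natDegree ≤ n ∧ ζ.eval lm = 1 ∧
      ∀ ζ' : Polynomial ℝ, ζ'.natDegree ≤ n → ζ'.eval lm = 1 →
        wip b lam ζ ζ ≤ wip b lam ζ' ζ')
    (hπ : π.Monic ∧ π.natDegree = n + 1 ∧
      ∀ q : Polynomial ℝ, q.natDegree ≤ n → wip b lam q π = 0) :
    ζ.natDegree = n ∧
    ∃ γ : Fin (n + 1) → ℝ, ∃ μ : Fin n → ℝ,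
      π = ∏ i, (Polynomial.X - Polynomial.C (γ i)) ∧
      ζ = Polynomial.C ζ.leadingCoeff * ∏ i, (Polynomial.X - Polynomial.C (μ i)) ∧
      StrictAnti γ ∧ StrictAnti μ ∧
      (∀ i, μ i ∈ Set.Icc lam_d lam_1) ∧
      ∀ i : Fin n, γ i.succ < μ i ∧ μ i < γ i.castSucc := by
  obtain ⟨hζdeg_le, hζlm, hζmin⟩ := hζ
  obtain ⟨hmon, hπdeg, horth⟩ := hπ
  have hπ0 : π ≠ 0 := hmon.ne_zero
  have hζ0 : ζ ≠ 0 := by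
    intro h; rw [h] at hζlm; simp at hζlm
  -- positivity of the norm of ζ
  set m := wip b lam ζ ζ with hm_def
  have hm : 0 < m := by
    rcases eq_or_lt_of_le (wip_self_nonneg b lam ζ) with h | h
    · exact absurd (hpd ζ hζdeg_le h.symm) hζ0
    · exact h
  -- variational orthogonality
  have horthζ : ∀ q : Polynomial ℝ, q.natDegree ≤ n → q.eval lm = 0 →
      wip b lam ζ q = 0 := by
    intro q hqdeg hqlm
    set a := wip b lam ζ q with ha_def
    set c := wip b lam q q with hc_def
    have hc : 0 ≤ c := wip_self_nonneg b lam q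
    by_contra ha
    set t : ℝ := -a/(c+1) with ht_def
    have hfeas : (ζ + Polynomial.C t * q).natDegree ≤ n := by
      refine le_trans (natDegree_add_le _ _) ?_
      refine max_le hζdeg_le (le_trans (natDegree_C_mul_le _ _) hqdeg)
    have heval : (ζ + Polynomial.C t * q).eval lm = 1 := by
      simp [eval_add, eval_mul, hζlm, hqlm]
    have hge := hζmin _ hfeas heval
    rw [wip_expand] at hge
    have hlt : m + 2*t*a + t^2*c < m := by
      have h1 : 2*t*a + t^2*c = -(a^2*(c+2))/(c+1)^2 := by
        rw [ht_def]; field_simp; ring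
      have h2 : 0 < a^2*(c+2) := by
        have := sq_nonneg a
        have ha2 : 0 < a^2 := by positivity
        nlinarith
      have h3 : 0 < (c+1)^2 := by positivity
      have : 2*t*a + t^2*c < 0 := by
        rw [h1]; exact div_neg_of_neg_of_pos (by linarith) h3
      linarith
    rw [← hm_def] at hge
    linarith
  -- reproducing property
  have hrepro : ∀ p : Polynomial ℝ, p.natDegree ≤ n →
      wip b lam ζ p = p.eval lm * m := by
    intro p hpdeg
    have hq : wip b lam ζ (p - Polynomial.C (p.eval lm) * ζ) = 0 := by
      apply horthζ
      · refine le_trans (natDegree_sub_le _ _) ?_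
        exact max_le hpdeg (le_trans (natDegree_C_mul_le _ _) hζdeg_le)
      · simp [eval_sub, eval_mul, hζlm]
    rw [wip_sub_right, wip_smul_right] at hq
    rw [← hm_def] at hq
    linarith
  -- degree of ζ is exactly n
  have hζdeg : ζ.natDegree = n := by
    rcases eq_or_lt_of_le hζdeg_le with h | h
    · exact h
    · exfalso
      set q := (X - Polynomial.C lm) * ζ with hq_def
      have hqdeg : q.natDegree ≤ n := by
        rw [hq_def, natDegree_mul (X_sub_C_ne_zero lm) hζ0, natDegree_X_sub_C]
        omega
      have hqlm : q.eval lm = 0 := by simp [hq_def]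
      have h0 := horthζ q hqdeg hqlm
      have hterm : ∀ i, (b i)^2 * ζ.eval (lam i) * q.eval (lam i)
          = (lam i - lm) * (b i * ζ.eval (lam i))^2 := by
        intro i; rw [hq_def]; simp [eval_mul, eval_sub]; ring
      have hzero : ∀ i ∈ Finset.univ, (0:ℝ) ≤ (b i)^2 * ζ.eval (lam i) * q.eval (lam i) := by
        intro i _; rw [hterm i]
        have h1 : 0 < lam i - lm := by have := (hnodes i).1; linarith
        positivity
      have hall := (Finset.sum_eq_zero_iff_of_nonneg hzero).mp h0
      have hζζ : wip b lam ζ ζ = 0 := by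
        unfold wip
        refine Finset.sum_eq_zero fun i _ => ?_
        have hi := hall i (Finset.mem_univ i)
        rw [hterm i] at hi
        have h1 : 0 < lam i - lm := by have := (hnodes i).1; linarith
        have hsq : (b i * ζ.eval (lam i))^2 = 0 := by
          rcases mul_eq_zero.mp hi with h' | h'
          · linarith
          · exact h'
        have hb : b i * ζ.eval (lam i) = 0 := sq_eq_zero_iff.mp hsq
        calc (b i)^2 * ζ.eval (lam i) * ζ.eval (lam i)
            = (b i * ζ.eval (lam i))^2 := by ring
          _ = 0 := by rw [hb]; ring
      rw [← hm_def] at hζζ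
      linarith
  -- roots of π
  have hcard : π.roots.card = n + 1 := pi_roots_card hpd hmon hπdeg horth
  have hnodup : π.roots.Nodup := pi_roots_nodup hpd hmon hπdeg horth
  have hc : π.roots.toFinset.card = n + 1 := by
    rw [Multiset.toFinset_card_of_nodup hnodup, hcard]
  set e := π.roots.toFinset.orderIsoOfFin hc with he
  set γ : Fin (n+1) → ℝ := fun i => (e i.rev : ℝ) with hγ_def
  have hγanti : StrictAnti γ := by
    intro i j hij
    have h : j.rev < i.rev := Fin.rev_lt_rev.mpr hij
    exact_mod_cast e.strictMono h
  have hγinj : Function.Injective γ := hγanti.injective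
  have hγroot : ∀ i, π.eval (γ i) = 0 := by
    intro i
    have h : (γ i) ∈ π.roots.toFinset := (e i.rev).2
    rw [Multiset.mem_toFinset] at h
    exact (mem_roots hπ0).mp h
  have hγIcc : ∀ i, γ i ∈ Set.Icc lam_d lam_1 := fun i =>
    root_in_Icc hnodes hpd hmon hπdeg horth (hγroot i)
  have hπfact : π = ∏ i, (X - Polynomial.C (γ i)) := by
    have h := factor_of_distinct_roots π hπ0 hπdeg γ hγinj hγroot
    rwa [hmon.leadingCoeff, map_one, one_mul] at h
  -- sign of ζ at the roots of π
  have hsign : ∀ j : Fin (n+1), 0 < (-1:ℝ)^(n + (j:ℕ)) * ζ.eval (γ j) := by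
    intro j
    set qp : Polynomial ℝ := ∏ k ∈ Finset.univ.erase j, (X - Polynomial.C (γ k)) with hqp_def
    have hqpmon : qp.Monic := monic_prod_of_monic _ _ fun k _ => monic_X_sub_C _
    have hqpdeg : qp.natDegree = n := by
      rw [hqp_def, natDegree_prod _ _ fun k _ => X_sub_C_ne_zero _]
      simp [Finset.card_erase_of_mem (Finset.mem_univ j)]
    have hqpeval : ∀ x : ℝ, qp.eval x = ∏ k ∈ Finset.univ.erase j, (x - γ k) := by
      intro x; rw [hqp_def, eval_prod]; simp
    have hqγ_ne : qp.eval (γ j) ≠ 0 := by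
      rw [hqpeval]
      refine Finset.prod_ne_zero_iff.mpr fun k hk => ?_
      have : k ≠ j := (Finset.mem_erase.mp hk).1
      have : γ k ≠ γ j := fun h => this (hγinj h)
      intro h; apply this; linarith
    -- the key polynomial identity
    set D : Polynomial ℝ := Polynomial.C (qp.eval (γ j)) * (qp * ζ)
        - Polynomial.C (ζ.eval (γ j)) * qp^2 with hD_def
    have hDvanish : ∀ k, D.eval (γ k) = 0 := by
      intro k
      by_cases hkj : k = j
      · subst hkj
        simp only [hD_def, eval_sub, eval_mul, eval_C, eval_pow]
        ring
      · have hz : qp.eval (γ k) = 0 := by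
          rw [hqpeval]
          apply Finset.prod_eq_zero (Finset.mem_erase.mpr ⟨hkj, Finset.mem_univ k⟩)
          ring
        simp only [hD_def, eval_sub, eval_mul, eval_C, eval_pow, hz]
        ring
    obtain ⟨t, ht⟩ : π ∣ D := by
      rw [hπfact]
      exact prod_X_sub_C_dvd_of_roots γ hγinj D hDvanish
    have htdeg : t.natDegree ≤ n := by
      rcases eq_or_ne t 0 with rfl | ht0
      · simp
      · have hD0 : D ≠ 0 := by
          rw [ht]; exact mul_ne_zero hπ0 ht0
        have hDdeg : D.natDegree ≤ 2*n := by
          rw [hD_def]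
          refine le_trans (natDegree_sub_le _ _) (max_le ?_ ?_)
          · refine le_trans (natDegree_C_mul_le _ _) ?_
            refine le_trans (natDegree_mul_le) ?_
            rw [hqpdeg, hζdeg]; omega
          · refine le_trans (natDegree_C_mul_le _ _) ?_
            have hq2 : (qp^2).natDegree = 2*n := by rw [natDegree_pow, hqpdeg]
            omega
        have h := ht ▸ hDdeg
        rw [natDegree_mul hπ0 ht0, hπdeg] at h
        omega
    -- apply the linear functional wip 1 ·
    have hL : wip b lam 1 D = 0 := by
      rw [ht]
      have h1 : wip b lam 1 (π * t) = wip b lam t π := by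
        unfold wip
        exact Finset.sum_congr rfl fun i _ => by simp [eval_mul]; ring
      rw [h1]
      exact horth t htdeg
    rw [hD_def, wip_sub_right, wip_smul_right, wip_smul_right] at hL
    have h2 : wip b lam 1 (qp * ζ) = qp.eval lm * m := by
      have h2' : wip b lam 1 (qp * ζ) = wip b lam ζ qp := by
        unfold wip
        exact Finset.sum_congr rfl fun i _ => by simp [eval_mul]; ring
      rw [h2', hrepro qp (le_of_eq hqpdeg)]
    have h3 : wip b lam 1 (qp^2) = wip b lam qp qp := by
      unfold wip
      exact Finset.sum_congr rfl fun i _ => by simp [eval_pow, eval_mul]; ring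
    rw [h2, h3] at hL
    set W := wip b lam qp qp with hW_def
    have hW : 0 < W := by
      rcases eq_or_lt_of_le (wip_self_nonneg b lam qp) with h | h
      · exact absurd (hpd qp (le_of_eq hqpdeg) h.symm) hqpmon.ne_zero
      · exact h
    -- signs
    obtain ⟨A, hA, hAeq⟩ : ∃ A : ℝ, 0 < A ∧ qp.eval lm = (-1)^n * A := by
      have h := prod_neg_sign (Finset.univ.erase j) (fun k => lm - γ k)
        (fun k _ => by show lm - γ k < 0; have := (hγIcc k).1; linarith)
      rw [Finset.card_erase_of_mem (Finset.mem_univ j)] at h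
      simp only [Finset.card_univ, Fintype.card_fin, Nat.add_sub_cancel] at h
      obtain ⟨A, hA, hAeq⟩ := h
      exact ⟨A, hA, by rw [hqpeval]; exact hAeq⟩
    obtain ⟨B, hB, hBeq⟩ : ∃ B : ℝ, 0 < B ∧ qp.eval (γ j) = (-1)^(j:ℕ) * B := by
      have hsplit : Finset.univ.erase j = Finset.Iio j ∪ Finset.Ioi j :=
        erase_eq_Iio_union_Ioi j
      have hdisj : Disjoint (Finset.Iio j) (Finset.Ioi j) := by
        rw [Finset.disjoint_left]
        intro k hk1 hk2
        rw [Finset.mem_Iio] at hk1; rw [Finset.mem_Ioi] at hk2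
        exact absurd (hk1.trans hk2) (lt_irrefl _)
      have hprod : qp.eval (γ j) = (∏ k ∈ Finset.Iio j, (γ j - γ k))
          * (∏ k ∈ Finset.Ioi j, (γ j - γ k)) := by
        rw [hqpeval, hsplit, Finset.prod_union hdisj]
      obtain ⟨B1, hB1, hB1eq⟩ := prod_neg_sign (Finset.Iio j) (fun k => γ j - γ k)
        (fun k hk => by
          show γ j - γ k < 0
          have h := hγanti (Finset.mem_Iio.mp hk)
          linarith)
      have hB2 : 0 < ∏ k ∈ Finset.Ioi j, (γ j - γ k) := by
        refine Finset.prod_pos fun k hk => ?_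
        have h := hγanti (Finset.mem_Ioi.mp hk)
        linarith
      refine ⟨B1 * ∏ k ∈ Finset.Ioi j, (γ j - γ k), mul_pos hB1 hB2, ?_⟩
      rw [hprod, hB1eq, Fin.card_Iio]
      ring
    -- conclude
    have hkey : ζ.eval (γ j) * W = (-1:ℝ)^(n + (j:ℕ)) * (A * B * m) := by
      have h := hL
      rw [hAeq, hBeq] at h
      rw [pow_add]
      linear_combination -h
    by_contra hcon
    push_neg at hcon
    have h1 : (-1:ℝ)^(n + (j:ℕ)) * ζ.eval (γ j) * W ≤ 0 :=
      mul_nonpos_of_nonpos_of_nonneg hcon (le_of_lt hW)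
    have h2 : (-1:ℝ)^(n + (j:ℕ)) * ζ.eval (γ j) * W = A * B * m := by
      rw [mul_assoc, hkey, ← mul_assoc, ← pow_add]
      have : (-1:ℝ)^(n + (j:ℕ) + (n + (j:ℕ))) = 1 := by
        rw [← two_mul, pow_mul]
        norm_num
      rw [this, one_mul]
    rw [h2] at h1
    linarith [mul_pos (mul_pos hA hB) hm]
  -- sign change between consecutive roots: find μ
  have hIVT : ∀ i : Fin n, ∃ x, x ∈ Set.Ioo (γ i.succ) (γ i.castSucc) ∧ ζ.eval x = 0 := by
    intro i
    have hlt : γ i.succ < γ i.castSucc := hγanti Fin.castSucc_lt_succ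
    have hs1 := hsign i.succ
    have hs2 := hsign i.castSucc
    rw [Fin.val_succ] at hs1
    rw [Fin.coe_castSucc] at hs2
    have hflip : (-1:ℝ)^(n + ((i:ℕ)+1)) = -(-1:ℝ)^(n + (i:ℕ)) := by
      rw [← Nat.add_assoc, pow_succ]; ring
    rw [hflip] at hs1
    have hopp : ζ.eval (γ i.succ) * ζ.eval (γ i.castSucc) < 0 := by
      have h := mul_pos hs1 hs2
      have hsq : ((-1:ℝ)^(n + (i:ℕ)))^2 = 1 := by
        rw [← pow_mul, mul_comm, pow_mul]
        norm_num
      nlinarith [h, hsq]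
    rcases lt_or_ge (ζ.eval (γ i.succ)) 0 with hneg | hpos
    · have hpos2 : 0 < ζ.eval (γ i.castSucc) := by nlinarith
      obtain ⟨x, hx1, hx2⟩ := intermediate_value_Ioo (le_of_lt hlt) ζ.continuousOn
        (Set.mem_Ioo.mpr ⟨hneg, hpos2⟩)
      exact ⟨x, hx1, hx2⟩
    · have hpos1 : 0 < ζ.eval (γ i.succ) := by
        rcases eq_or_lt_of_le hpos with h | h
        · exfalso; rw [← h] at hopp; simp at hopp
        · exact h
      have hneg2 : ζ.eval (γ i.castSucc) < 0 := by nlinarith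
      obtain ⟨x, hx1, hx2⟩ := intermediate_value_Ioo' (le_of_lt hlt) ζ.continuousOn
        (Set.mem_Ioo.mpr ⟨hneg2, hpos1⟩)
      exact ⟨x, hx1, hx2⟩
  choose μ hμIoo hμroot using hIVT
  -- μ is strictly decreasing
  have hμanti : StrictAnti μ := by
    intro i j hij
    have h1 : μ j < γ j.castSucc := (hμIoo j).2
    have h2 : γ i.succ < μ i := (hμIoo i).1
    have h3 : γ j.castSucc ≤ γ i.succ := by
      rcases eq_or_lt_of_le (show i.succ ≤ j.castSucc by
        rw [Fin.le_def, Fin.val_succ, Fin.coe_castSucc]; omega) with h | h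
      · rw [h]
      · exact le_of_lt (hγanti h)
    linarith
  have hμinj : Function.Injective μ := hμanti.injective
  -- μ in Icc
  have hμIcc : ∀ i, μ i ∈ Set.Icc lam_d lam_1 := by
    intro i
    have h1 := (hμIoo i).1
    have h2 := (hμIoo i).2
    have h3 := (hγIcc i.succ).1
    have h4 := (hγIcc i.castSucc).2
    exact ⟨by linarith, by linarith⟩
  -- factorization of ζ
  have hζfact : ζ = Polynomial.C ζ.leadingCoeff * ∏ i, (X - Polynomial.C (μ i)) :=
    factor_of_distinct_roots ζ hζ0 hζdeg μ hμinj hμroot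
  exact ⟨hζdeg, γ, μ, hπfact, hζfact, hγanti, hμanti, hμIcc,
    fun i => ⟨(hμIoo i).1, (hμIoo i).2⟩⟩
end

section
/- Let D be a positive definite diagonal real m×m matrix, G a positive semidefinite symmetric m×m matrix, and B a diagonal real m×m matrix. Then the matrix D + B²·D⁻¹·G is invertible. -/
theorem stmt14 {m : ℕ} (D B G : Matrix (Fin m) (Fin m) ℝ)
    (hD : D.IsDiag) (hDpos : ∀ i, 0 < D i i) (hB : B.IsDiag) (hG : G.PosSemidef) :
    IsUnit (D + B * B * (D⁻¹ * G)) := by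
  obtain ⟨d, rfl⟩ : ∃ d, D = Matrix.diagonal d := ⟨D.diag, hD.diagonal_diag.symm⟩
  obtain ⟨b, rfl⟩ : ∃ b, B = Matrix.diagonal b := ⟨B.diag, hB.diagonal_diag.symm⟩
  have hd : ∀ i, 0 < d i := by
    intro i; simpa using hDpos i
  have hd0 : ∀ i, d i ≠ 0 := fun i => (hd i).ne'
  have hinv : (Matrix.diagonal d)⁻¹ = Matrix.diagonal fun i => (d i)⁻¹ := by
    apply Matrix.inv_eq_right_inv
    rw [Matrix.diagonal_mul_diagonal]
    simp [Matrix.diagonal_one, hd0]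
  set a : Fin m → ℝ := fun i => b i * (d i)⁻¹ with ha
  have key : Matrix.diagonal d + Matrix.diagonal b * Matrix.diagonal b *
      ((Matrix.diagonal d)⁻¹ * G) =
      Matrix.diagonal d * (1 + Matrix.diagonal a * (Matrix.diagonal a * G)) := by
    rw [hinv, Matrix.mul_add, Matrix.mul_one]
    simp only [← Matrix.mul_assoc, Matrix.diagonal_mul_diagonal]
    have hfun : (fun i => b i * b i * (d i)⁻¹) = fun i => d i * (a i * a i) := by
      funext i
      rw [ha]
      field_simp [hd0 i]
    rw [hfun]
  rw [key]
  have h1 : IsUnit (Matrix.diagonal d) := by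
    rw [Matrix.isUnit_iff_isUnit_det, Matrix.det_diagonal]
    exact (Finset.prod_pos fun i _ => hd i).ne'.isUnit
  have h2 : IsUnit (1 + Matrix.diagonal a * (Matrix.diagonal a * G)) := by
    rw [Matrix.isUnit_iff_isUnit_det, Matrix.det_one_add_mul_comm]
    have hpsd : (Matrix.diagonal a * G * (Matrix.diagonal a).conjTranspose).PosSemidef :=
      hG.mul_mul_conjTranspose_same _
    have hco : (Matrix.diagonal a).conjTranspose = Matrix.diagonal a := by
      rw [Matrix.diagonal_conjTranspose]
      simp
    rw [hco] at hpsd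
    have hpd : (1 + Matrix.diagonal a * G * Matrix.diagonal a).PosDef :=
      Matrix.PosDef.add_posSemidef Matrix.PosDef.one hpsd
    exact hpd.det_pos.ne'.isUnit
  exact h1.mul h2
end
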